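/- Let φ : ℝⁿ → ℝ be continuously differentiable and bounded from below, let a, b > 0, let (x^k) satisfy the sufficient-decrease condition (H1) and the modified relative-error condition (H3), let x̄ be an accumulation point of (x^k), and suppose φ satisfies the exponent PLK condition at x̄ with exponent q ∈ (1/2, 1) and some constant M > 0. Then there exist σ > 0 and K ∈ ℕ such that ‖x^k − x̄‖ ≤ σ · k^{−(1−q)/(2q−1)} for all k ≥ K. -/

import Mathlib

open Filter Topology

/-- Concavity-type inequality for `t ^ (1-q)`. -/
lemma aux_concave_rpow {q t s : ℝ} (hq0 : 0 < q) (hq1 : q < 1) (ht : 0 < t)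
    (hs : 0 ≤ s) (hst : s ≤ t) :
    (1 - q) * t ^ (-q) * (t - s) ≤ t ^ (1 - q) - s ^ (1 - q) := by
  have hP : (0:ℝ) ≤ t ^ (1 - q) := Real.rpow_nonneg ht.le _
  have hQ : (0:ℝ) ≤ s * t ^ (-q) := mul_nonneg hs (Real.rpow_nonneg ht.le _)
  have amgm : (t ^ (1 - q)) ^ q * (s * t ^ (-q)) ^ (1 - q)
      ≤ q * t ^ (1 - q) + (1 - q) * (s * t ^ (-q)) :=
    Real.geom_mean_le_arith_mean2_weighted hq0.le (by linarith) hP hQ (by ring)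
  have key : (t ^ (1 - q)) ^ q * (s * t ^ (-q)) ^ (1 - q) = s ^ (1 - q) := by
    rw [Real.mul_rpow hs (Real.rpow_nonneg ht.le _), ← Real.rpow_mul ht.le,
      ← Real.rpow_mul ht.le, show (-q) * (1 - q) = -((1 - q) * q) by ring]
    have h1 : t ^ ((1 - q) * q) * t ^ (-((1 - q) * q)) = 1 := by
      rw [← Real.rpow_add ht]; simp
    linear_combination s ^ (1 - q) * h1
  rw [key] at amgm
  have hid : t ^ (-q) * t = t ^ (1 - q) := by
    nth_rewrite 2 [show t = t ^ (1:ℝ) by rw [Real.rpow_one]]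
    rw [← Real.rpow_add ht]; congr 1; ring
  nlinarith [amgm, hid]

/-- Convexity-type inequality for `t ^ (-α)`. -/
lemma aux_convex_rpow {α s t : ℝ} (hα0 : 0 < α) (hα1 : α < 1) (ht : 0 < t)
    (hts : t ≤ s) :
    s ^ (-α) + α * s ^ (-(α + 1)) * (s - t) ≤ t ^ (-α) := by
  have hs : 0 < s := lt_of_lt_of_le ht hts
  have hA : 0 < t ^ α := Real.rpow_pos_of_pos ht _
  have hB : 0 < s ^ α := Real.rpow_pos_of_pos hs _
  have hD : 0 < s - α * (s - t) := by
    nlinarith [mul_le_mul_of_nonneg_right hα1.le (by linarith : (0:ℝ) ≤ s - t)]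
  have amgm : t ^ α * s ^ (1 - α) ≤ α * t + (1 - α) * s :=
    Real.geom_mean_le_arith_mean2_weighted hα0.le (by linarith) ht.le hs.le (by ring)
  have hs1 : s ^ (1 - α) * s ^ α = s := by
    rw [← Real.rpow_add hs]; norm_num
  have amgm2 : t ^ α * s ≤ (s - α * (s - t)) * s ^ α := by
    have h := mul_le_mul_of_nonneg_right amgm hB.le
    calc t ^ α * s = t ^ α * s ^ (1 - α) * s ^ α := by
          rw [mul_assoc, hs1]
      _ ≤ (α * t + (1 - α) * s) * s ^ α := h
      _ = (s - α * (s - t)) * s ^ α := by ring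
  have hkey : (s + α * (s - t)) * (s - α * (s - t)) ≤ s ^ 2 := by
    nlinarith [sq_nonneg (α * (s - t))]
  have main : t ^ α * (s + α * (s - t)) ≤ s ^ α * s := by
    apply le_of_mul_le_mul_right _ hs
    have h1 := mul_le_mul_of_nonneg_right amgm2
      (by nlinarith [mul_nonneg hα0.le (by linarith : (0:ℝ) ≤ s - t)] : (0:ℝ) ≤ s + α * (s - t))
    have h2 := mul_le_mul_of_nonneg_left hkey hB.le
    nlinarith [h1, h2]
  rw [Real.rpow_neg ht.le α, Real.rpow_neg hs.le α, Real.rpow_neg hs.le (α + 1),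
    show s ^ (α + 1) = s ^ α * s by rw [Real.rpow_add hs, Real.rpow_one]]
  rw [← sub_nonneg]
  have e : (t ^ α)⁻¹ - ((s ^ α)⁻¹ + α * (s ^ α * s)⁻¹ * (s - t))
      = (s ^ α * s - t ^ α * (s + α * (s - t))) / (t ^ α * (s ^ α * s)) := by
    field_simp
  rw [e]
  exact div_nonneg (by linarith) (by positivity)

set_option maxHeartbeats 2000000 in
theorem iterate_sublinear_high_exponent_H3
    (n : ℕ) (φ : EuclideanSpace ℝ (Fin n) → ℝ)
    (hφ : ContDiff ℝ 1 φ)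
    (hbdd : ∃ m : ℝ, ∀ x, m ≤ φ x)
    (a b : ℝ) (ha : 0 < a) (hb : 0 < b)
    (x : ℕ → EuclideanSpace ℝ (Fin n))
    (hH1 : ∀ k : ℕ, φ (x (k + 1)) + a * ‖x (k + 1) - x k‖ ^ 2 ≤ φ (x k))
    (hH3 : ∀ k : ℕ, ‖gradient φ (x k)‖ ≤ b * ‖x (k + 1) - x k‖)
    (xbar : EuclideanSpace ℝ (Fin n))
    (hacc : ∃ σ : ℕ → ℕ, StrictMono σ ∧
      Tendsto (fun j => x (σ j)) atTop (𝓝 xbar))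
    (q : ℝ) (hq : q ∈ Set.Ioo (1/2 : ℝ) 1)
    (M : ℝ) (hM : 0 < M)
    (hPLK : ∃ ε η : ℝ, 0 < ε ∧ 0 < η ∧
      ∀ y, ‖y - xbar‖ < ε → φ xbar < φ y → φ y < φ xbar + η →
        (1 / (M * (1 - q))) * (φ y - φ xbar) ^ q ≤ ‖gradient φ y‖) :
    ∃ σ' > (0 : ℝ), ∃ K : ℕ, ∀ k ≥ K,
      ‖x k - xbar‖ ≤ σ' * (k : ℝ) ^ (-((1 - q) / (2 * q - 1))) := by
  obtain ⟨σ, hσmono, hσtend⟩ := hacc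
  obtain ⟨hq12, hq1⟩ := hq
  obtain ⟨ε, η, hε, hη, hKL⟩ := hPLK
  have hq0 : (0:ℝ) < q := by linarith
  have h1q : (0:ℝ) < 1 - q := by linarith
  have hσge : ∀ j, j ≤ σ j := fun j => hσmono.le_apply
  -- monotonicity of φ along the sequence
  have hmono : ∀ k, φ (x (k + 1)) ≤ φ (x k) := by
    intro k
    have h1 := hH1 k
    have h2 : 0 ≤ a * ‖x (k + 1) - x k‖ ^ 2 := by positivity
    linarith
  have hmono2 : Antitone fun k => φ (x k) := antitone_nat_of_succ_le hmono
  have hmono' : ∀ {k l : ℕ}, k ≤ l → φ (x l) ≤ φ (x k) := fun {k l} h => hmono2 h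
  have hφtend : Tendsto (fun j => φ (x (σ j))) atTop (𝓝 (φ xbar)) :=
    (hφ.continuous.tendsto xbar).comp hσtend
  have hlb : ∀ k, φ xbar ≤ φ (x k) := by
    intro k
    apply le_of_tendsto hφtend
    filter_upwards [eventually_ge_atTop k] with j hj
    exact hmono' (hj.trans (hσge j))
  by_cases hcase : ∃ k0, φ (x k0) ≤ φ xbar
  · -- degenerate case : sequence becomes constant
    obtain ⟨k0, hk0⟩ := hcase
    have heq : ∀ k, k0 ≤ k → φ (x k) = φ xbar :=
      fun k hk => le_antisymm ((hmono' hk).trans hk0) (hlb k)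
    have hconst : ∀ k, k0 ≤ k → x k = x k0 := by
      intro k hk
      induction k, hk using Nat.le_induction with
      | base => rfl
      | succ k hk ih =>
        have h1 := hH1 k
        have e1 : φ (x k) = φ xbar := heq k hk
        have e2 : φ (x (k + 1)) = φ xbar := heq (k + 1) (by omega)
        have hz : ‖x (k + 1) - x k‖ ^ 2 ≤ 0 := by nlinarith
        have hz2 : ‖x (k + 1) - x k‖ = 0 := by
          nlinarith [norm_nonneg (x (k + 1) - x k), sq_nonneg ‖x (k + 1) - x k‖]
        have : x (k + 1) = x k := by
          rw [← sub_eq_zero]; exact norm_eq_zero.mp hz2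
        rw [this, ih]
    have hxbar : x k0 = xbar := by
      have hc : Tendsto (fun j => x (σ j)) atTop (𝓝 (x k0)) := by
        apply Tendsto.congr' _ tendsto_const_nhds
        filter_upwards [eventually_ge_atTop k0] with j hj
        exact (hconst (σ j) (hj.trans (hσge j))).symm
      exact tendsto_nhds_unique hc hσtend
    refine ⟨1, one_pos, k0 + 1, fun k hk => ?_⟩
    have : x k = x k0 := hconst k (by omega)
    rw [this, hxbar, sub_self, norm_zero, one_mul]
    exact Real.rpow_nonneg (Nat.cast_nonneg k) _
  · -- main case
    push_neg at hcase
    set r : ℕ → ℝ := fun k => φ (x k) - φ xbar with hr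
    have hrpos : ∀ k, 0 < r k := fun k => sub_pos.mpr (hcase k)
    have hrmono : ∀ {k l : ℕ}, k ≤ l → r l ≤ r k :=
      fun {k l} h => sub_le_sub_right (hmono' h) _
    have hrtendσ : Tendsto (fun j => r (σ j)) atTop (𝓝 0) := by
      have := hφtend.sub_const (φ xbar)
      simpa [hr] using this
    set E : ℝ := (M * (1 - q) * b) ^ 2 with hE
    have hEpos : 0 < E := by positivity
    set c : ℝ := a / E with hc
    have hcpos : 0 < c := by positivity
    set C : ℝ := b * M / a with hC
    have hCpos : 0 < C := by positivity
    have hM1q : 0 < M * (1 - q) := by positivity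
    -- one-step estimates
    have step : ∀ k, ‖x k - xbar‖ < ε → r k < η →
        r (k + 1) ≤ r k - c * r k ^ (2 * q) ∧
          ‖x (k + 1) - x k‖ ≤ C * (r k ^ (1 - q) - r (k + 1) ^ (1 - q)) := by
      intro k hxk hrk
      set Δ := ‖x (k + 1) - x k‖ with hΔ
      have hΔ0 : 0 ≤ Δ := norm_nonneg _
      have hφη : φ (x k) < φ xbar + η := by
        have : r k < η := hrk
        simp only [hr] at this; linarith
      have hg := (hKL (x k) hxk (hcase k) hφη).trans (hH3 k)
      have hgb : (1 / (M * (1 - q))) * r k ^ q ≤ b * Δ := hg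
      have hq' : r k ^ q ≤ M * (1 - q) * b * Δ := by
        calc r k ^ q = (M * (1 - q)) * ((1 / (M * (1 - q))) * r k ^ q) := by
              field_simp
          _ ≤ (M * (1 - q)) * (b * Δ) := by
              exact mul_le_mul_of_nonneg_left hgb hM1q.le
          _ = M * (1 - q) * b * Δ := by ring
      have hH1k : a * Δ ^ 2 ≤ r k - r (k + 1) := by
        have h := hH1 k
        simp only [hr]; linarith
      have hPnn : 0 ≤ r k ^ q := Real.rpow_nonneg (hrpos k).le q
      have hrmono1 : r (k + 1) ≤ r k := hrmono (Nat.le_succ k)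
      constructor
      · -- recursion
        have h2q : r k ^ (2 * q) = r k ^ q * r k ^ q := by
          rw [two_mul, Real.rpow_add (hrpos k)]
        have hsq : r k ^ q * r k ^ q ≤ E * Δ ^ 2 := by
          rw [hE]
          calc r k ^ q * r k ^ q ≤ (M * (1 - q) * b * Δ) * (M * (1 - q) * b * Δ) :=
                mul_self_le_mul_self hPnn hq'
            _ = (M * (1 - q) * b) ^ 2 * Δ ^ 2 := by ring
        have h9 : a * (r k ^ q * r k ^ q) ≤ a * (E * Δ ^ 2) :=
          mul_le_mul_of_nonneg_left hsq ha.le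
        have : c * r k ^ (2 * q) ≤ a * Δ ^ 2 := by
          rw [h2q, hc, div_mul_eq_mul_div, div_le_iff₀ hEpos]
          linarith [h9]
        linarith
      · -- step length
        have hcc := aux_concave_rpow hq0 hq1 (hrpos k) (hrpos (k + 1)).le hrmono1
        have hS : 0 ≤ r k ^ (1 - q) - r (k + 1) ^ (1 - q) := by
          have h0 : 0 ≤ (1 - q) * r k ^ (-q) * (r k - r (k + 1)) := by
            have : (0:ℝ) ≤ r k ^ (-q) := Real.rpow_nonneg (hrpos k).le _
            have h1 : (0:ℝ) ≤ r k - r (k + 1) := by linarith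
            positivity
          linarith
        rcases eq_or_lt_of_le hΔ0 with h0 | hΔpos
        · rw [← h0]; positivity
        · set S := r k ^ (1 - q) - r (k + 1) ^ (1 - q) with hSdef
          have hmulid : r k ^ (-q) * r k ^ q = 1 := by
            rw [← Real.rpow_add (hrpos k)]; simp
          have h5 : (1 - q) * (r k - r (k + 1)) ≤ S * r k ^ q := by
            have h6 := mul_le_mul_of_nonneg_right hcc hPnn
            have e : (1 - q) * r k ^ (-q) * (r k - r (k + 1)) * r k ^ q
                = (1 - q) * (r k - r (k + 1)) := by
              linear_combination ((1 - q) * (r k - r (k + 1))) * hmulid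
            rw [e] at h6; exact h6
          have hSnn : 0 ≤ S := hS
          have t1 : a * ((1 - q) * Δ ^ 2) ≤ (1 - q) * (r k - r (k + 1)) := by
            have := mul_le_mul_of_nonneg_left hH1k h1q.le
            linarith [this]
          have t2 : S * r k ^ q ≤ S * (M * (1 - q) * b * Δ) :=
            mul_le_mul_of_nonneg_left hq' hSnn
          have h7 : a * Δ * ((1 - q) * Δ) ≤ S * M * b * ((1 - q) * Δ) := by
            linarith [t1, h5, t2]
          have h8 : a * Δ ≤ S * M * b :=
            le_of_mul_le_mul_right h7 (by positivity)
          rw [hC, div_mul_eq_mul_div, le_div_iff₀ ha]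
          linarith [h8]
    -- choose a good starting index K1 = σ j0
    have hxdist : Tendsto (fun j => ‖x (σ j) - xbar‖) atTop (𝓝 0) := by
      have := (hσtend.sub_const xbar).norm
      simpa using this
    have h1ev : ∀ᶠ j in atTop, ‖x (σ j) - xbar‖ < ε / 2 :=
      hxdist.eventually_lt_const (by linarith)
    have h2ev : ∀ᶠ j in atTop, r (σ j) < η :=
      hrtendσ.eventually_lt_const hη
    have h3ev : ∀ᶠ j in atTop, C * r (σ j) ^ (1 - q) < ε / 2 := by
      have hcont : ContinuousAt (fun z : ℝ => z ^ (1 - q)) 0 :=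
        Real.continuousAt_rpow_const 0 (1 - q) (Or.inr h1q.le)
      have h0 : Tendsto (fun j => r (σ j) ^ (1 - q)) atTop (𝓝 0) := by
        have := hcont.tendsto.comp hrtendσ
        simpa [Function.comp_def, Real.zero_rpow (ne_of_gt h1q)] using this
      have h0' : Tendsto (fun j => C * r (σ j) ^ (1 - q)) atTop (𝓝 0) := by
        simpa using h0.const_mul C
      exact h0'.eventually_lt_const (by linarith)
    obtain ⟨j0, hj1, hj2, hj3⟩ := (h1ev.and (h2ev.and h3ev)).exists
    set K1 := σ j0 with hK1
    -- invariant : the tail stays in the ball of radius ε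
    have hball : ∀ k, K1 ≤ k →
        ‖x k - xbar‖ ≤ ‖x K1 - xbar‖ + C * (r K1 ^ (1 - q) - r k ^ (1 - q)) := by
      intro k hk
      induction k, hk using Nat.le_induction with
      | base => simp
      | succ k hk ih =>
        have hrK : r k < η := lt_of_le_of_lt (hrmono hk) hj2
        have hnn : 0 ≤ r k ^ (1 - q) := Real.rpow_nonneg (hrpos k).le _
        have hxk : ‖x k - xbar‖ < ε := by
          have hS : C * (r K1 ^ (1 - q) - r k ^ (1 - q)) ≤ C * r K1 ^ (1 - q) := by
            have : r K1 ^ (1 - q) - r k ^ (1 - q) ≤ r K1 ^ (1 - q) := by linarith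
            exact mul_le_mul_of_nonneg_left this hCpos.le
          linarith [ih, hj1, hj3, hS]
        obtain ⟨_, hstep⟩ := step k hxk hrK
        have tri : ‖x (k + 1) - xbar‖ ≤ ‖x (k + 1) - x k‖ + ‖x k - xbar‖ := by
          simpa [sub_add_sub_cancel] using norm_add_le (x (k + 1) - x k) (x k - xbar)
        linarith [tri, hstep, ih]
    have hin : ∀ k, K1 ≤ k → ‖x k - xbar‖ < ε ∧ r k < η := by
      intro k hk
      refine ⟨?_, lt_of_le_of_lt (hrmono hk) hj2⟩
      have hnn : 0 ≤ r k ^ (1 - q) := Real.rpow_nonneg (hrpos k).le _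
      have hS : C * (r K1 ^ (1 - q) - r k ^ (1 - q)) ≤ C * r K1 ^ (1 - q) := by
        have : r K1 ^ (1 - q) - r k ^ (1 - q) ≤ r K1 ^ (1 - q) := by linarith
        exact mul_le_mul_of_nonneg_left this hCpos.le
      linarith [hball k hk, hj1, hj3, hS]
    -- telescoping estimate
    have htel : ∀ k m, K1 ≤ k → k ≤ m →
        ‖x m - x k‖ ≤ C * (r k ^ (1 - q) - r m ^ (1 - q)) := by
      intro k m hk hkm
      induction m, hkm using Nat.le_induction with
      | base => simp
      | succ m hm ih =>
        obtain ⟨hxm, hrm⟩ := hin m (hk.trans hm)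
        obtain ⟨_, hstep⟩ := step m hxm hrm
        have tri : ‖x (m + 1) - x k‖ ≤ ‖x (m + 1) - x m‖ + ‖x m - x k‖ := by
          simpa [sub_add_sub_cancel] using norm_add_le (x (m + 1) - x m) (x m - x k)
        linarith [tri, hstep, ih]
    -- tail bound
    have htail : ∀ k, K1 ≤ k → ‖x k - xbar‖ ≤ C * r k ^ (1 - q) := by
      intro k hk
      have hlim : Tendsto (fun j => ‖x (σ j) - x k‖) atTop (𝓝 ‖xbar - x k‖) :=
        (hσtend.sub_const (x k)).norm
      have hle : ‖xbar - x k‖ ≤ C * r k ^ (1 - q) := by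
        apply le_of_tendsto hlim
        filter_upwards [eventually_ge_atTop k] with j hj
        have h := htel k (σ j) hk (hj.trans (hσge j))
        have hnn : 0 ≤ r (σ j) ^ (1 - q) := Real.rpow_nonneg (hrpos _).le _
        have h2 : C * (r k ^ (1 - q) - r (σ j) ^ (1 - q)) ≤ C * r k ^ (1 - q) := by
          have : r k ^ (1 - q) - r (σ j) ^ (1 - q) ≤ r k ^ (1 - q) := by linarith
          exact mul_le_mul_of_nonneg_left this hCpos.le
        linarith
      rwa [norm_sub_rev] at hle
    -- the recursion for r ^ (-α)
    set α : ℝ := 2 * q - 1 with hα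
    have hα0 : 0 < α := by rw [hα]; linarith
    have hα1 : α < 1 := by rw [hα]; linarith
    have hrec : ∀ k, K1 ≤ k → r k ^ (-α) + c * α ≤ r (k + 1) ^ (-α) := by
      intro k hk
      obtain ⟨h1, _⟩ := step k (hin k hk).1 (hin k hk).2
      set t := r k - c * r k ^ (2 * q) with htdef
      have ht : 0 < t := lt_of_lt_of_le (hrpos (k + 1)) h1
      have hts : t ≤ r k := by
        have : 0 ≤ c * r k ^ (2 * q) :=
          mul_nonneg hcpos.le (Real.rpow_nonneg (hrpos k).le _)
        rw [htdef]; linarith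
      have hcv := aux_convex_rpow hα0 hα1 ht hts
      have hmono2 : t ^ (-α) ≤ r (k + 1) ^ (-α) :=
        Real.rpow_le_rpow_of_nonpos (hrpos (k + 1)) h1 (by linarith)
      have hid : r k ^ (-(α + 1)) * r k ^ (2 * q) = 1 := by
        rw [← Real.rpow_add (hrpos k), show -(α + 1) + 2 * q = 0 by rw [hα]; ring,
          Real.rpow_zero]
      have e2 : α * r k ^ (-(α + 1)) * (r k - t) = c * α := by
        rw [show r k - t = c * r k ^ (2 * q) by rw [htdef]; ring]
        linear_combination α * c * hid
      rw [e2] at hcv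
      linarith [hcv, hmono2]
    -- linear growth of r ^ (-α)
    have hgrow : ∀ k, K1 ≤ k → c * α * ((k : ℝ) - (K1 : ℝ)) ≤ r k ^ (-α) := by
      intro k hk
      induction k, hk using Nat.le_induction with
      | base =>
        simp only [sub_self, mul_zero]
        exact (Real.rpow_pos_of_pos (hrpos K1) _).le
      | succ k hk ih =>
        have h := hrec k hk
        have hcast : ((k + 1 : ℕ) : ℝ) = (k : ℝ) + 1 := by push_cast; ring
        rw [hcast]
        linarith [h, ih]
    -- conclusion
    set θ : ℝ := (1 - q) / (2 * q - 1) with hθ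
    have hθα : θ = (1 - q) / α := by rw [hθ, hα]
    have hθ0 : 0 < θ := by rw [hθα]; positivity
    refine ⟨C * (c * α / 2) ^ (-θ), by positivity, 2 * K1 + 2, fun k hk => ?_⟩
    have hkK1 : K1 ≤ k := by omega
    have hk2 : (2 : ℝ) ≤ (k : ℝ) := by
      have : (2 : ℕ) ≤ k := by omega
      exact_mod_cast this
    have hK1k : (K1 : ℝ) ≤ (k : ℝ) / 2 := by
      have h2 : (2 * K1 + 2 : ℕ) ≤ k := hk
      have : ((2 * K1 + 2 : ℕ) : ℝ) ≤ (k : ℝ) := by exact_mod_cast h2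
      push_cast at this
      linarith
    have hApos : 0 < c * α / 2 * (k : ℝ) := by positivity
    have hA : c * α / 2 * (k : ℝ) ≤ r k ^ (-α) := by
      have h1 := hgrow k hkK1
      have h2 : c * α / 2 * (k : ℝ) ≤ c * α * ((k : ℝ) - (K1 : ℝ)) := by
        have hca : 0 ≤ c * α := (mul_pos hcpos hα0).le
        nlinarith [mul_le_mul_of_nonneg_left hK1k hca]
      exact le_trans h2 h1
    have hexp : r k ^ (1 - q) = (r k ^ (-α)) ^ (-θ) := by
      rw [← Real.rpow_mul (hrpos k).le]
      congr 1
      rw [hθα]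
      field_simp
    have h6 : r k ^ (1 - q) ≤ (c * α / 2 * (k : ℝ)) ^ (-θ) := by
      rw [hexp]
      exact Real.rpow_le_rpow_of_nonpos hApos hA (by linarith)
    have h7 : (c * α / 2 * (k : ℝ)) ^ (-θ) = (c * α / 2) ^ (-θ) * (k : ℝ) ^ (-θ) :=
      Real.mul_rpow (by positivity) (Nat.cast_nonneg k)
    have h8 := htail k hkK1
    have h9 : C * r k ^ (1 - q) ≤ C * ((c * α / 2) ^ (-θ) * (k : ℝ) ^ (-θ)) := by
      rw [← h7]
      exact mul_le_mul_of_nonneg_left h6 hCpos.le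
    calc ‖x k - xbar‖ ≤ C * r k ^ (1 - q) := h8
      _ ≤ C * ((c * α / 2) ^ (-θ) * (k : ℝ) ^ (-θ)) := h9
      _ = C * (c * α / 2) ^ (-θ) * (k : ℝ) ^ (-θ) := by ring
      _ = C * (c * α / 2) ^ (-θ) * (k : ℝ) ^ (-((1 - q) / (2 * q - 1))) := by rw [← hθ]
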